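/- Let 1 < n < m < 2n < ω and let (X, T) be an n-maximal, m-resolvable space that is hereditarily (m+1)-irresolvable. Then no expansion U ⊇ T makes (X, U) both exactly n-resolvable and quasi-regular. -/

import Mathlib

open Set TopologicalSpace

variable {X : Type*}

/-- The family `D : ι → Set X` witnesses `ι`-resolvability of the subspace `S` of `(X, T)`:
the `D i` are pairwise disjoint nonempty subsets of `S`, each dense in the subspace `S`
(equivalently `S ⊆ closure (D i)`). -/
def ResolvableFam (T : TopologicalSpace X) (S : Set X) (ι : Type*) : Prop :=
  ∃ D : ι → Set X, (∀ i, D i ⊆ S) ∧ (∀ i, (D i).Nonempty) ∧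
    (∀ i, S ⊆ @closure X T (D i)) ∧ (Pairwise fun i j => Disjoint (D i) (D j))

/-- A topology is quasi-regular if every nonempty open set contains the closure
of some nonempty open set. -/
def QuasiRegular (T : TopologicalSpace X) : Prop :=
  ∀ U : Set X, T.IsOpen U → U.Nonempty →
    ∃ V : Set X, T.IsOpen V ∧ V.Nonempty ∧ @closure X T V ⊆ U

lemma helper_closure_le {T U : TopologicalSpace X} (h : ∀ s, T.IsOpen s → U.IsOpen s)
    (s : Set X) : @closure X U s ⊆ @closure X T s := by
  letI := U
  refine closure_minimal (@subset_closure X T s) ?_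
  exact ⟨h _ (@isClosed_closure X T s).isOpen_compl⟩

lemma helper_open_dense [t : TopologicalSpace X] {O s : Set X}
    (hO : IsOpen O) (h : O ⊆ closure s) : O ⊆ closure (s ∩ O) := by
  intro x hx
  have h2 := hO.inter_closure (⟨hx, h hx⟩ : x ∈ O ∩ closure s)
  rwa [inter_comm] at h2

lemma helper_nonempty_of_dense [t : TopologicalSpace X] {O s : Set X}
    (hne : O.Nonempty) (h : O ⊆ closure s) : s.Nonempty := by
  by_contra hs
  rw [not_nonempty_iff_eq_empty] at hs
  obtain ⟨x, hx⟩ := hne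
  have := h hx
  rw [hs, closure_empty] at this
  exact this

lemma helper_cover [t : TopologicalSpace X] {ι : Type*} [DecidableEq ι] (s : Finset ι)
    (A : ι → Set X) (O : Set X) (hO : IsOpen O) (hne : O.Nonempty)
    (hcov : O ⊆ ⋃ i ∈ s, closure (A i)) :
    ∃ i ∈ s, ∃ O' : Set X, IsOpen O' ∧ O'.Nonempty ∧ O' ⊆ O ∧ O' ⊆ closure (A i) := by
  induction s using Finset.induction_on generalizing O with
  | empty =>
    obtain ⟨x, hx⟩ := hne
    simpa using hcov hx
  | @insert i s hi ih =>
    by_cases hcase : (O \ ⋃ j ∈ s, closure (A j)).Nonempty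
    · refine ⟨i, Finset.mem_insert_self _ _, O \ ⋃ j ∈ s, closure (A j),
        hO.sdiff (isClosed_biUnion_finset fun j _ => isClosed_closure), hcase, diff_subset, ?_⟩
      intro x hx
      have := hcov hx.1
      simp only [Finset.mem_insert, iUnion_iUnion_eq_or_left, mem_union] at this
      rcases this with h1 | h2
      · exact h1
      · exact absurd h2 (by simpa using hx.2)
    · rw [not_nonempty_iff_eq_empty, diff_eq_empty] at hcase
      obtain ⟨j, hj, rest⟩ := ih O hO hne hcase
      exact ⟨j, Finset.mem_insert_of_mem hj, rest⟩

lemma helper_phi [t : TopologicalSpace X] {n m : ℕ} (hn : 0 < n)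
    (D : Fin n → Set X) (E : Fin m → Set X)
    (hDcov : ⋃ i, D i = univ)
    (hEdense : ∀ j, (univ : Set X) ⊆ closure (E j))
    (H0 : Set X) (hH0 : IsOpen H0) (hH0ne : H0.Nonempty) :
    ∃ (H : Set X) (φ : Fin m → Fin n), IsOpen H ∧ H.Nonempty ∧ H ⊆ H0 ∧
      ∀ j, H ⊆ closure (D (φ j) ∩ E j) := by
  suffices h : ∀ s : Finset (Fin m), ∃ (H : Set X) (φ : Fin m → Fin n), IsOpen H ∧ H.Nonempty ∧
      H ⊆ H0 ∧ ∀ j ∈ s, H ⊆ closure (D (φ j) ∩ E j) by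
    obtain ⟨H, φ, h1, h2, h3, h4⟩ := h Finset.univ
    exact ⟨H, φ, h1, h2, h3, fun j => h4 j (Finset.mem_univ j)⟩
  intro s
  induction s using Finset.induction_on with
  | empty => exact ⟨H0, fun _ => ⟨0, hn⟩, hH0, hH0ne, subset_rfl, by simp⟩
  | @insert j s hjs ih =>
    obtain ⟨H, φ, hHo, hHne, hHsub, hφ⟩ := ih
    have hcov : H ⊆ ⋃ i ∈ (Finset.univ : Finset (Fin n)), closure (D i ∩ E j ∩ H) := by
      have hx1 : H ⊆ closure (E j ∩ H) :=
        helper_open_dense hHo (fun y hy => hEdense j (mem_univ y))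
      have heq : E j ∩ H = ⋃ i ∈ (Finset.univ : Finset (Fin n)), (D i ∩ E j ∩ H) := by
        ext y
        simp only [Finset.mem_univ, iUnion_true, mem_iUnion, mem_inter_iff]
        constructor
        · rintro ⟨h1, h2⟩
          have : y ∈ ⋃ i, D i := by rw [hDcov]; trivial
          obtain ⟨i, hi⟩ := mem_iUnion.1 this
          exact ⟨i, ⟨hi, h1⟩, h2⟩
        · rintro ⟨i, ⟨_, h1⟩, h2⟩; exact ⟨h1, h2⟩
      rw [heq, Finset.closure_biUnion] at hx1
      exact hx1
    obtain ⟨i, _, O', hO'o, hO'ne, hO'sub, hO'cl⟩ :=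
      helper_cover Finset.univ _ H hHo hHne hcov
    refine ⟨O', Function.update φ j i, hO'o, hO'ne, hO'sub.trans hHsub, ?_⟩
    intro j' hj'
    rcases Finset.mem_insert.1 hj' with rfl | hj's
    · rw [Function.update_self]
      exact hO'cl.trans (closure_mono (fun y hy => hy.1))
    · rw [Function.update_of_ne (ne_of_mem_of_not_mem hj's hjs)]
      exact hO'sub.trans (hφ j' hj's)

lemma helper_closure_subset [t : TopologicalSpace X] {A B : Set X} (h : A ⊆ closure B) :
    closure A ⊆ closure B :=
  closure_minimal h isClosed_closure

lemma helper_Uopen_dense [t : TopologicalSpace X] {V D : Set X} (hV : IsOpen V)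
    (hD : (univ : Set X) ⊆ closure D) : V ⊆ closure (D ∩ V) :=
  helper_open_dense hV (fun x _ => hD trivial)

lemma helper_open_inter_nonempty [t : TopologicalSpace X] {O s : Set X} (hO : IsOpen O)
    (hOne : O.Nonempty) (h : O ⊆ closure s) : (s ∩ O).Nonempty :=
  helper_nonempty_of_dense hOne (helper_open_dense hO h)

lemma helper_main {X : Type*} (U : TopologicalSpace X) [T : TopologicalSpace X] (n m : ℕ)
    (h1 : 1 < n) (h2 : n < m) (h3 : m < 2 * n)
    (hmax : ∀ A : Set X, A.Nonempty → interior (closure A) = ∅ →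
      ¬ ResolvableFam T A (Fin n))
    (hres : ResolvableFam T (univ : Set X) (Fin m))
    (hirr : ∀ A : Set X, A.Nonempty → ¬ ResolvableFam T A (Fin (m + 1)))
    (hTU : ∀ s, T.IsOpen s → U.IsOpen s)
    (hnres : ResolvableFam U (univ : Set X) (Fin n))
    (hn1 : ¬ ResolvableFam U (univ : Set X) (Fin (n + 1)))
    (hqr : QuasiRegular U) : False := by
  classical
  obtain ⟨D0, hD0sub, hD0ne, hD0dense, hD0disj⟩ := hnres
  obtain ⟨E, hEsub, hEne, hEdense, hEdisj⟩ := hres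
  have hm0 : 0 < m := by omega
  have hn0 : 0 < n := by omega
  have hXne : (univ : Set X).Nonempty := ⟨(hD0ne ⟨0, hn0⟩).choose, trivial⟩
  -- modify D0 so that it covers X
  set D : Fin n → Set X :=
    fun i => if i = ⟨0, hn0⟩ then D0 i ∪ (univ \ ⋃ i', D0 i') else D0 i with hD
  have hDsup : ∀ i, D0 i ⊆ D i := by
    intro i; rw [hD]; dsimp only; split_ifs
    · exact subset_union_left
    · exact subset_rfl
  have hDcov : ⋃ i, D i = univ := by
    apply eq_univ_of_forall
    intro x
    by_cases hx : x ∈ ⋃ i', D0 i'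
    · obtain ⟨i, hi⟩ := mem_iUnion.1 hx
      exact mem_iUnion.2 ⟨i, hDsup i hi⟩
    · refine mem_iUnion.2 ⟨⟨0, hn0⟩, ?_⟩
      rw [hD]; simp only [if_pos rfl]
      exact Or.inr ⟨trivial, hx⟩
  have hDdense : ∀ i, (univ : Set X) ⊆ @closure X U (D i) :=
    fun i => (hD0dense i).trans (@closure_mono X U _ _ (hDsup i))
  have hDdisj : Pairwise fun i j => Disjoint (D i) (D j) := by
    intro i j hij
    rw [hD]; dsimp only
    have base := hD0disj hij
    split_ifs with hi hj hj
    · exact absurd (hi.trans hj.symm) hij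
    · refine disjoint_union_left.2 ⟨base, ?_⟩
      rw [Set.disjoint_left]
      rintro x ⟨-, hx⟩ hxj
      exact hx (mem_iUnion.2 ⟨j, hxj⟩)
    · refine disjoint_union_right.2 ⟨base, ?_⟩
      rw [Set.disjoint_left]
      rintro x hxi ⟨-, hx⟩
      exact hx (mem_iUnion.2 ⟨i, hxi⟩)
    · exact base
  -- every nonempty U-open set is T-somewhere dense (uses n-maximality)
  have key1 : ∀ V : Set X, U.IsOpen V → V.Nonempty → (interior (closure V)).Nonempty := by
    intro V hVo hVne
    rw [nonempty_iff_ne_empty]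
    intro hint
    apply hmax V hVne hint
    have hdense : ∀ i, V ⊆ @closure X U (D i ∩ V) :=
      fun i => helper_Uopen_dense (t := U) hVo (hDdense i)
    refine ⟨fun i => D i ∩ V, fun i => inter_subset_right, ?_, ?_, ?_⟩
    · intro i
      exact helper_nonempty_of_dense (t := U) hVne (hdense i)
    · intro i
      exact (hdense i).trans (helper_closure_le hTU _)
    · intro i j hij
      exact ((hDdisj hij).mono inter_subset_left inter_subset_left)
  -- El'kin-type reduction: find U-open G with no (n+1)-resolvable U-open subset
  set P : Set (Set X) := {Z | U.IsOpen Z ∧ ResolvableFam U Z (Fin (n + 1))} with hPdef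
  have hzorn : ∀ c ⊆ {F : Set (Set X) | F ⊆ P ∧ F.Pairwise fun Z Z' => Disjoint Z Z'},
      IsChain (· ⊆ ·) c → ∃ ub ∈ {F : Set (Set X) | F ⊆ P ∧
        F.Pairwise fun Z Z' => Disjoint Z Z'}, ∀ s ∈ c, s ⊆ ub := by
    intro c hcS hchain
    refine ⟨⋃₀ c, ⟨?_, ?_⟩, fun s hs => subset_sUnion_of_mem hs⟩
    · rintro Z ⟨F1, hF1, hZF1⟩
      exact (hcS hF1).1 hZF1
    · rintro Z ⟨F1, hF1, hZF1⟩ Z' ⟨F2, hF2, hZF2⟩ hne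
      rcases eq_or_ne F1 F2 with rfl | h12
      · exact (hcS hF1).2 hZF1 hZF2 hne
      · rcases hchain hF1 hF2 h12 with h | h
        · exact (hcS hF2).2 (h hZF1) hZF2 hne
        · exact (hcS hF1).2 hZF1 (h hZF2) hne
  obtain ⟨F, hFmax⟩ :=
    zorn_subset {F : Set (Set X) | F ⊆ P ∧ F.Pairwise fun Z Z' => Disjoint Z Z'} hzorn
  have hFS := hFmax.prop
  set G : Set X := (@closure X U (⋃₀ F))ᶜ with hGdef
  have hGo : U.IsOpen G := (@isClosed_closure X U (⋃₀ F)).isOpen_compl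
  have hGne : G.Nonempty := by
    rw [nonempty_iff_ne_empty]
    intro hGe
    have hcl : ∀ x : X, x ∈ @closure X U (⋃₀ F) := by
      intro x
      by_contra hx
      exact (Set.eq_empty_iff_forall_notMem.1 hGe x) hx
    have hFne : F.Nonempty := by
      rcases Set.eq_empty_or_nonempty F with hFe | h
      · exfalso
        have hne2 : (⋃₀ F).Nonempty :=
          helper_nonempty_of_dense (t := U) hXne (fun y _ => hcl y)
        rw [hFe] at hne2
        simp at hne2
      · exact h
    have hw : ∀ Z ∈ F, ∃ d : Fin (n + 1) → Set X, (∀ l, d l ⊆ Z) ∧ (∀ l, (d l).Nonempty) ∧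
        (∀ l, Z ⊆ @closure X U (d l)) ∧ (Pairwise fun l l' => Disjoint (d l) (d l')) :=
      fun Z hZ => (hFS.1 hZ).2
    choose! d hd1 hd2 hd3 hd4 using hw
    apply hn1
    obtain ⟨Z0, hZ0⟩ := hFne
    refine ⟨fun l => ⋃ Z ∈ F, d Z l, fun l => subset_univ _, ?_, ?_, ?_⟩
    · intro l
      obtain ⟨x, hx⟩ := hd2 Z0 hZ0 l
      exact ⟨x, mem_biUnion hZ0 hx⟩
    · intro l x _x
      have hsub : ⋃₀ F ⊆ @closure X U (⋃ Z ∈ F, d Z l) := by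
        rintro y ⟨Z, hZ, hyZ⟩
        have h5 : @closure X U (d Z l) ⊆ @closure X U (⋃ Z ∈ F, d Z l) :=
          @closure_mono X U _ _ (subset_biUnion_of_mem (u := fun Z => d Z l) hZ)
        exact h5 (hd3 Z hZ l hyZ)
      exact helper_closure_subset (t := U) hsub (hcl x)
    · intro l l' hll'
      rw [Set.disjoint_left]
      intro x hx hx'
      obtain ⟨Z, hZ, hxZ⟩ := mem_iUnion₂.1 hx
      obtain ⟨Z', hZ', hxZ'⟩ := mem_iUnion₂.1 hx'
      rcases eq_or_ne Z Z' with rfl | hZZ'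
      · exact Set.disjoint_left.1 (hd4 Z hZ hll') hxZ hxZ'
      · exact Set.disjoint_left.1 (hFS.2 hZ hZ' hZZ') (hd1 Z hZ l hxZ) (hd1 Z' hZ' l' hxZ')
  have hGprop : ∀ Z : Set X, U.IsOpen Z → Z ⊆ G → ¬ ResolvableFam U Z (Fin (n + 1)) := by
    intro Z hZo hZG hZres
    have hZne : Z.Nonempty := by
      obtain ⟨d, hd1, hd2, -, -⟩ := hZres
      obtain ⟨x, hx⟩ := hd2 ⟨0, by omega⟩
      exact ⟨x, hd1 _ hx⟩
    have hZdisjF : ∀ Z' ∈ F, Disjoint Z Z' := by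
      intro Z' hZ'
      rw [Set.disjoint_left]
      intro x hxZ hxZ'
      exact (hZG hxZ) (@subset_closure X U (⋃₀ F) _ (mem_sUnion.2 ⟨Z', hZ', hxZ'⟩))
    have hZnF : Z ∉ F := by
      intro hZF
      obtain ⟨x, hx⟩ := hZne
      exact (hZdisjF Z hZF).le_bot ⟨hx, hx⟩
    have hmem : insert Z F ⊆ P ∧ (insert Z F).Pairwise fun A B => Disjoint A B := by
      constructor
      · intro W hW
        rcases Set.mem_insert_iff.1 hW with rfl | hW
        · exact ⟨hZo, hZres⟩
        · exact hFS.1 hW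
      · intro A hA B hB hAB
        rcases Set.mem_insert_iff.1 hA with hAZ | hA'
        · rcases Set.mem_insert_iff.1 hB with hBZ | hB'
          · exact absurd (hAZ.trans hBZ.symm) hAB
          · rw [hAZ]; exact hZdisjF B hB'
        · rcases Set.mem_insert_iff.1 hB with hBZ | hB'
          · rw [hBZ]; exact (hZdisjF A hA').symm
          · exact hFS.2 hA' hB' hAB
    exact hZnF (hFmax.2 hmem (subset_insert Z F) (mem_insert Z F))
  -- the T-somewhere-dense part of G, and the φ-construction inside it
  have hH0ne : (interior (closure G)).Nonempty := key1 G hGo hGne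
  obtain ⟨H, φ, hHo, hHne, hHsub, hφ⟩ :=
    helper_phi hn0 D E hDcov hEdense (interior (closure G)) isOpen_interior hH0ne
  have hHG : (G ∩ H).Nonempty :=
    helper_open_inter_nonempty hHo hHne (hHsub.trans interior_subset)
  -- pigeonhole: some fiber of φ has at most one element
  have hpig : ∃ i : Fin n, (Finset.univ.filter fun j => φ j = i).card ≤ 1 := by
    by_contra hcon
    push_neg at hcon
    have hsum : (Finset.univ : Finset (Fin m)).card =
        ∑ i : Fin n, (Finset.univ.filter fun j => φ j = i).card :=
      Finset.card_eq_sum_card_fiberwise (fun j _ => Finset.mem_univ (φ j))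
    have h2n : 2 * n ≤ m := by
      calc 2 * n = ∑ _i : Fin n, 2 := by
            simp [Finset.sum_const, Finset.card_univ, mul_comm]
        _ ≤ ∑ i : Fin n, (Finset.univ.filter fun j => φ j = i).card :=
            Finset.sum_le_sum fun i _ => hcon i
        _ = m := by rw [← hsum, Finset.card_univ, Fintype.card_fin]
    omega
  obtain ⟨istar, histar⟩ := hpig
  set jstar : Fin m := if h : ∃ j, φ j = istar then h.choose else ⟨0, hm0⟩ with hjstardef
  have hjstar : ∀ j, φ j = istar → j = jstar := by
    intro j hj
    rw [hjstardef, dif_pos ⟨j, hj⟩]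
    exact Finset.card_le_one.1 histar j (Finset.mem_filter.2 ⟨Finset.mem_univ _, hj⟩) _
      (Finset.mem_filter.2 ⟨Finset.mem_univ _,
        (⟨j, hj⟩ : ∃ j', φ j' = istar).choose_spec⟩)
  set Y0 : Set X := H ∩ G with hY0def
  have hY0o : U.IsOpen Y0 := U.isOpen_inter _ _ (hTU H hHo) hGo
  have hY0ne : Y0.Nonempty := by rw [hY0def, inter_comm]; exact hHG
  have hY0G : Y0 ⊆ G := inter_subset_right
  have hY0H : Y0 ⊆ H := inter_subset_left
  by_cases hVex : ∃ V : Set X, U.IsOpen V ∧ V.Nonempty ∧ @closure X U V ⊆ Y0 ∧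
      interior (@closure X U V) = ∅
  · -- good case: V with U-closure contained in Y0 and T-nowhere dense U-closure
    obtain ⟨V, hVo, hVne, hVcl, hVint⟩ := hVex
    set C : Set X := @closure X U V with hCdef
    have hVC : V ⊆ C := @subset_closure X U V
    have hVH : V ⊆ H := fun x hx => hY0H (hVcl (hVC hx))
    have hWne : (interior (closure V)).Nonempty := key1 V hVo hVne
    set A : Set X := interior (closure V) ∩ H with hAdef
    have hAo : IsOpen A := isOpen_interior.inter hHo
    have hAne : A.Nonempty := by
      rw [hAdef, inter_comm]
      exact helper_open_inter_nonempty isOpen_interior hWne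
        (interior_subset.trans (closure_mono hVH))
    have hPdense : A ⊆ closure (D istar ∩ V ∩ A) := by
      have s1 : V ⊆ @closure X U (D istar ∩ V) :=
        helper_Uopen_dense (t := U) hVo (hDdense istar)
      have s2 : closure V ⊆ closure (D istar ∩ V) :=
        helper_closure_subset (s1.trans (helper_closure_le hTU _))
      exact helper_open_dense hAo (fun x hx => s2 (interior_subset hx.1))
    have hQdense : A ⊆ closure (D istar ∩ (H \ C) ∩ A) := by
      have hHC : H ⊆ closure (H \ C) := by
        intro x hx
        rw [mem_closure_iff]
        intro O hOo hxO
        by_contra hOC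
        rw [not_nonempty_iff_eq_empty] at hOC
        have hsubC : O ∩ H ⊆ C := by
          intro y hy
          by_contra hyC
          exact (Set.eq_empty_iff_forall_notMem.1 hOC y) ⟨hy.1, hy.2, hyC⟩
        have : O ∩ H ⊆ interior C := interior_maximal hsubC (hOo.inter hHo)
        rw [hVint] at this
        exact this ⟨hxO, hx⟩
      have hUo2 : U.IsOpen (H \ C) := by
        rw [diff_eq]
        exact U.isOpen_inter _ _ (hTU H hHo) (@isClosed_closure X U V).isOpen_compl
      have s1 : H \ C ⊆ @closure X U (D istar ∩ (H \ C)) :=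
        helper_Uopen_dense (t := U) hUo2 (hDdense istar)
      have s2 : closure (H \ C) ⊆ closure (D istar ∩ (H \ C)) :=
        helper_closure_subset (s1.trans (helper_closure_le hTU _))
      exact helper_open_dense hAo (fun x hx => s2 (hHC hx.2))
    have hSdense : ∀ j : Fin m, A ⊆ closure (D (φ j) ∩ E j ∩ A) := fun j =>
      helper_open_dense hAo (fun x hx => hφ j hx.2)
    set FF : Fin (m + 1) → Set X := fun k =>
      if hk : k.val < m then
        (if k.val = jstar.val then D istar ∩ V ∩ A
         else D (φ ⟨k.val, hk⟩) ∩ E ⟨k.val, hk⟩ ∩ A)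
      else D istar ∩ (H \ C) ∩ A with hFFdef
    have hFF : ∀ k : Fin (m + 1), (FF k = D istar ∩ (H \ C) ∩ A ∧ k.val = m) ∨
        (FF k = D istar ∩ V ∩ A ∧ k.val = jstar.val) ∨
        (∃ hk : k.val < m, FF k = D (φ ⟨k.val, hk⟩) ∩ E ⟨k.val, hk⟩ ∩ A ∧
          k.val ≠ jstar.val ∧ φ ⟨k.val, hk⟩ ≠ istar) := by
      intro k
      by_cases hk : k.val < m
      · by_cases hkj : k.val = jstar.val
        · exact Or.inr (Or.inl ⟨by rw [hFFdef]; dsimp only; rw [dif_pos hk, if_pos hkj], hkj⟩)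
        · refine Or.inr (Or.inr ⟨hk, by rw [hFFdef]; dsimp only; rw [dif_pos hk, if_neg hkj],
            hkj, ?_⟩)
          intro hphi
          exact hkj (congrArg Fin.val (hjstar ⟨k.val, hk⟩ hphi))
      · have := k.isLt
        exact Or.inl ⟨by rw [hFFdef]; dsimp only; rw [dif_neg hk], by omega⟩
    have hdense : ∀ k, A ⊆ closure (FF k) := by
      intro k
      rcases hFF k with ⟨e, -⟩ | ⟨e, -⟩ | ⟨hk, e, -, -⟩
      · rw [e]; exact hQdense
      · rw [e]; exact hPdense
      · rw [e]; exact hSdense _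
    have hFsub : ∀ k, FF k ⊆ A := by
      intro k
      rcases hFF k with ⟨e, -⟩ | ⟨e, -⟩ | ⟨hk, e, -, -⟩ <;> rw [e] <;> exact inter_subset_right
    have hFne : ∀ k, (FF k).Nonempty := fun k => helper_nonempty_of_dense hAne (hdense k)
    have hdisjPQ : Disjoint (D istar ∩ V ∩ A) (D istar ∩ (H \ C) ∩ A) := by
      rw [Set.disjoint_left]
      rintro x ⟨⟨-, hxV⟩, -⟩ ⟨⟨-, -, hxC⟩, -⟩
      exact hxC (hVC hxV)
    have hdisjPS : ∀ j : Fin m, φ j ≠ istar →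
        Disjoint (D istar ∩ V ∩ A) (D (φ j) ∩ E j ∩ A) := fun j hj =>
      (hDdisj (Ne.symm hj)).mono (inter_subset_left.trans inter_subset_left)
        (inter_subset_left.trans inter_subset_left)
    have hdisjQS : ∀ j : Fin m, φ j ≠ istar →
        Disjoint (D istar ∩ (H \ C) ∩ A) (D (φ j) ∩ E j ∩ A) := fun j hj =>
      (hDdisj (Ne.symm hj)).mono (inter_subset_left.trans inter_subset_left)
        (inter_subset_left.trans inter_subset_left)
    have hdisjSS : ∀ j j' : Fin m, j ≠ j' →
        Disjoint (D (φ j) ∩ E j ∩ A) (D (φ j') ∩ E j' ∩ A) := fun j j' hjj' =>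
      (hEdisj hjj').mono (inter_subset_left.trans inter_subset_right)
        (inter_subset_left.trans inter_subset_right)
    have hpair : Pairwise fun k l => Disjoint (FF k) (FF l) := by
      intro k l hkl
      rcases hFF k with ⟨e1, p1⟩ | ⟨e1, p1⟩ | ⟨hk1, e1, p1, q1⟩ <;>
        rcases hFF l with ⟨e2, p2⟩ | ⟨e2, p2⟩ | ⟨hk2, e2, p2, q2⟩ <;> rw [e1, e2]
      · exact absurd (Fin.ext (p1.trans p2.symm)) hkl
      · exact hdisjPQ.symm
      · exact hdisjQS _ q2
      · exact hdisjPQ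
      · exact absurd (Fin.ext (p1.trans p2.symm)) hkl
      · exact hdisjPS _ q2
      · exact (hdisjQS _ q1).symm
      · exact (hdisjPS _ q1).symm
      · refine hdisjSS _ _ ?_
        intro he
        exact hkl (Fin.ext (by simpa using congrArg Fin.val he))
    exact hirr A hAne ⟨FF, hFsub, hFne, hdense, hpair⟩
  · -- bad case: U and T compatible below Y0; then Y0 is U-(n+1)-resolvable
    push_neg at hVex
    have hTin : ∀ Y : Set X, U.IsOpen Y → Y.Nonempty → Y ⊆ Y0 →
        ∃ O : Set X, IsOpen O ∧ O.Nonempty ∧ O ⊆ Y := by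
      intro Y hYo hYne hYY
      obtain ⟨V, hVo, hVne, hVcl⟩ := hqr Y hYo hYne
      have h5 := hVex V hVo hVne (hVcl.trans hYY)
      exact ⟨interior (@closure X U V), isOpen_interior, h5, interior_subset.trans hVcl⟩
    have hEU : ∀ j : Fin m, Y0 ⊆ @closure X U (E j ∩ Y0) := by
      intro j
      by_contra hc
      obtain ⟨x, hxY, hxn⟩ := not_subset.1 hc
      have hYo : U.IsOpen (Y0 ∩ (@closure X U (E j ∩ Y0))ᶜ) :=
        U.isOpen_inter _ _ hY0o (@isClosed_closure X U (E j ∩ Y0)).isOpen_compl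
      obtain ⟨O, hOo, hOne, hOY⟩ := hTin _ hYo ⟨x, hxY, hxn⟩ inter_subset_left
      obtain ⟨y, hyE, hyO⟩ :=
        helper_open_inter_nonempty hOo hOne (fun z _ => hEdense j trivial)
      have hyY := hOY hyO
      exact hyY.2 (@subset_closure X U (E j ∩ Y0) _ ⟨hyE, hyY.1⟩)
    apply hGprop Y0 hY0o hY0G
    refine ⟨fun k => E (Fin.castLE (by omega) k) ∩ Y0, fun k => inter_subset_right, ?_, ?_, ?_⟩
    · intro k
      exact helper_nonempty_of_dense (t := U) hY0ne (hEU _)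
    · intro k
      exact hEU _
    · intro k l hkl
      exact (hEdisj ((Fin.castLE_injective _).ne hkl)).mono inter_subset_left inter_subset_left
theorem stmt10 [T : TopologicalSpace X] (n m : ℕ) (h1 : 1 < n) (h2 : n < m)
    (h3 : m < 2 * n)
    (hmax : ∀ A : Set X, A.Nonempty → interior (closure A) = ∅ →
      ¬ ResolvableFam T A (Fin n))
    (hres : ResolvableFam T (univ : Set X) (Fin m))
    (hirr : ∀ A : Set X, A.Nonempty → ¬ ResolvableFam T A (Fin (m + 1))) :
    ∀ U : TopologicalSpace X, (∀ s, T.IsOpen s → U.IsOpen s) →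
      ¬ (ResolvableFam U (univ : Set X) (Fin n) ∧
         ¬ ResolvableFam U (univ : Set X) (Fin (n + 1)) ∧ QuasiRegular U) := by
  intro U hTU
  rintro ⟨a, b, c⟩
  exact @helper_main X U T n m h1 h2 h3 hmax hres hirr hTU a b c
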